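/- Let m be a prime with m ≡ 1 (mod 6). Then there exists an integer s with s² ≡ −3 (mod m), and m divides p(n,3) if and only if n is congruent modulo 6m to one of ±0, ±1, ±2, ±(2m−1), ±(2m+2), ±(3m+s(m−1)). -/

import Mathlib

open Finset

/-- The set of partitions of `n` into exactly 3 positive parts, as triples
`(a, b, c)` with `a ≥ b ≥ c ≥ 1` and `a + b + c = n`. -/
def P3 (n : ℕ) : Finset (ℕ × ℕ × ℕ) :=
  (Finset.range (n+1) ×ˢ Finset.range (n+1) ×ˢ Finset.range (n+1)).filter
    (fun t => t.2.1 ≤ t.1 ∧ t.2.2 ≤ t.2.1 ∧ 1 ≤ t.2.2 ∧ t.1 + t.2.1 + t.2.2 = n)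

/-- `p3 n` is the number of partitions of `n` into exactly 3 positive parts. -/
def p3 (n : ℕ) : ℕ := (P3 n).card

lemma mem_P3 {n : ℕ} {t : ℕ × ℕ × ℕ} :
    t ∈ P3 n ↔ t.2.1 ≤ t.1 ∧ t.2.2 ≤ t.2.1 ∧ 1 ≤ t.2.2 ∧ t.1 + t.2.1 + t.2.2 = n := by
  unfold P3
  simp only [Finset.mem_filter, Finset.mem_product, Finset.mem_range]
  constructor
  · tauto
  · intro hh
    refine ⟨⟨?_, ?_, ?_⟩, hh⟩ <;> omega

lemma p3_rec (n : ℕ) : p3 (n + 3) = p3 n + (n + 2) / 2 := by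
  classical
  have hsplit := Finset.card_filter_add_card_filter_not
    (s := P3 (n+3)) (p := fun t => t.2.2 = 1)
  have hB : ((P3 (n+3)).filter (fun t => ¬ t.2.2 = 1)).card = p3 n := by
    rw [p3]
    apply Finset.card_nbij' (fun t => (t.1 - 1, t.2.1 - 1, t.2.2 - 1))
      (fun t => (t.1 + 1, t.2.1 + 1, t.2.2 + 1))
    · intro t ht
      simp only [Finset.mem_coe, Finset.mem_filter, mem_P3] at ht ⊢
      omega
    · intro t ht
      simp only [Finset.mem_coe, Finset.mem_filter, mem_P3] at ht ⊢
      omega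
    · intro t ht
      simp only [Finset.mem_coe, Finset.mem_filter, mem_P3] at ht
      obtain ⟨a, b, c⟩ := t
      simp only [Prod.mk.injEq]
      simp only [] at ht
      refine ⟨by omega, by omega, by omega⟩
    · intro t ht
      obtain ⟨a, b, c⟩ := t
      simp only [Prod.mk.injEq]
      refine ⟨by omega, by omega, by omega⟩
  have hA : ((P3 (n+3)).filter (fun t => t.2.2 = 1)).card = (n + 2) / 2 := by
    rw [show (n+2)/2 = (Finset.Icc 1 ((n+2)/2)).card by rw [Nat.card_Icc]; omega]
    apply Finset.card_nbij' (fun t => t.2.1) (fun b => (n + 2 - b, b, 1))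
    · intro t ht
      simp only [Finset.mem_coe, Finset.mem_filter, mem_P3] at ht
      simp only [Finset.mem_coe, Finset.mem_Icc]
      omega
    · intro b hb
      simp only [Finset.mem_coe, Finset.mem_Icc] at hb
      simp only [Finset.mem_coe, Finset.mem_filter, mem_P3]
      refine ⟨⟨by omega, by omega, by omega, by omega⟩, trivial⟩
    · intro t ht
      simp only [Finset.mem_coe, Finset.mem_filter, mem_P3] at ht
      obtain ⟨a, b, c⟩ := t
      simp only [] at ht
      simp only [Prod.mk.injEq]
      refine ⟨by omega, trivial, by omega⟩
    · intro b hb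
      rfl
  rw [hA, hB] at hsplit
  rw [p3]
  omega

lemma p3_closed (n : ℕ) : p3 n = (n ^ 2 + 6) / 12 := by
  induction n using Nat.strong_induction_on with
  | _ n ih =>
    match n with
    | 0 => decide
    | 1 => decide
    | 2 => decide
    | (k + 3) =>
      rw [p3_rec, ih k (by omega)]
      have hK : k ^ 2 % 12 = (k % 12) ^ 2 % 12 := Nat.pow_mod k 2 12
      have hexp : (k + 3) ^ 2 = k ^ 2 + 6 * k + 9 := by ring
      rw [hexp]
      have h12 : k % 12 < 12 := Nat.mod_lt _ (by norm_num)
      obtain ⟨K, hKK⟩ : ∃ K, k ^ 2 = K := ⟨_, rfl⟩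
      rw [hKK] at hK ⊢
      set r := k % 12 with hr
      interval_cases r <;> norm_num at hK ⊢ <;> omega

lemma exists_s (m : ℕ) (hm : m.Prime) (h : m % 6 = 1) : ∃ s : ℤ, (m : ℤ) ∣ s ^ 2 + 3 := by
  haveI : Fact m.Prime := ⟨hm⟩
  have h7 : 7 ≤ m := by
    rcases Nat.lt_or_ge m 7 with hlt | hge
    · interval_cases m <;> simp_all (config := {decide := true})
    · exact hge
  obtain ⟨g, hg⟩ := IsCyclic.exists_ofOrder_eq_natCard (α := (ZMod m)ˣ)
  rw [Nat.card_eq_fintype_card, ZMod.card_units] at hg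
  obtain ⟨k, hk⟩ : ∃ k, m - 1 = 3 * k := ⟨(m-1)/3, by omega⟩
  have hk0 : 0 < k := by omega
  set ω : (ZMod m)ˣ := g ^ k with hω
  have hord : orderOf ω = 3 := by
    rw [hω, orderOf_pow, hg, hk, Nat.gcd_mul_left_left]
    rw [Nat.mul_comm]; exact Nat.mul_div_cancel_left 3 hk0
  have hω3 : ω ^ 3 = 1 := by rw [← hord]; exact pow_orderOf_eq_one ω
  have hω1 : ω ≠ 1 := by
    intro he
    rw [he, orderOf_one] at hord
    omega
  set w : ZMod m := (ω : ZMod m) with hw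
  have hw3 : w ^ 3 = 1 := by
    rw [hw, ← Units.val_pow_eq_pow_val, hω3, Units.val_one]
  have hw1 : w ≠ 1 := fun he => hω1 (Units.ext he)
  have hfac : (w - 1) * (w ^ 2 + w + 1) = 0 := by
    have : (w - 1) * (w ^ 2 + w + 1) = w ^ 3 - 1 := by ring
    rw [this, hw3, sub_self]
  have hq : w ^ 2 + w + 1 = 0 := by
    rcases mul_eq_zero.mp hfac with h1 | h2
    · exact absurd (by linear_combination h1) hw1
    · exact h2
  set s0 : ZMod m := 2 * w + 1 with hs0
  have hs0sq : s0 ^ 2 + 3 = 0 := by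
    have : s0 ^ 2 + 3 = 4 * (w ^ 2 + w + 1) := by rw [hs0]; ring
    rw [this, hq, mul_zero]
  refine ⟨(s0.val : ℤ), (ZMod.intCast_zmod_eq_zero_iff_dvd _ _).mp ?_⟩
  push_cast
  rw [ZMod.natCast_val, ZMod.cast_id]
  exact hs0sq

lemma dvd_shift (M a b k : ℤ) (hk : b - a = k * M) : M ∣ a ↔ M ∣ b := by
  have hkM : M ∣ k * M := ⟨k, mul_comm k M⟩
  constructor
  · intro hd
    have h2 := dvd_add hd hkM
    have : b = a + k * M := by linarith
    rw [this]; exact h2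
  · intro hd
    have h2 := dvd_sub hd hkM
    have : a = b - k * M := by linarith
    rw [this]; exact h2

lemma zmod_cast_iff (m : ℕ) (hco : IsCoprime (6:ℤ) (m:ℤ)) (n : ℕ) (X : ℤ) :
    ((n : ZMod (6*m)) = ((X : ℤ) : ZMod (6*m))) ↔
      ((6:ℤ) ∣ (n:ℤ) - X ∧ (m:ℤ) ∣ (n:ℤ) - X) := by
  have h1 : (n : ZMod (6*m)) = (((n:ℤ)) : ZMod (6*m)) := by norm_cast
  rw [h1, ZMod.intCast_eq_intCast_iff, Int.modEq_iff_dvd, ← dvd_sub_comm]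
  push_cast
  constructor
  · intro hd
    exact ⟨dvd_trans (dvd_mul_right 6 (m:ℤ)) hd, dvd_trans (dvd_mul_left (m:ℤ) 6) hd⟩
  · intro ⟨h6, hM⟩
    exact hco.mul_dvd h6 hM

/-- The common normal form: the disjunction of all residue classes. -/
def Dset (z M s : ℤ) : Prop :=
  ((6:ℤ) ∣ z ∧ M ∣ z) ∨
  ((6:ℤ) ∣ z - 1 ∧ M ∣ z - 1) ∨
  ((6:ℤ) ∣ z - 1 ∧ M ∣ z + 1) ∨
  ((6:ℤ) ∣ z + 1 ∧ M ∣ z - 1) ∨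
  ((6:ℤ) ∣ z + 1 ∧ M ∣ z + 1) ∨
  ((6:ℤ) ∣ z - 2 ∧ M ∣ z - 2) ∨
  ((6:ℤ) ∣ z - 2 ∧ M ∣ z + 2) ∨
  ((6:ℤ) ∣ z + 2 ∧ M ∣ z - 2) ∨
  ((6:ℤ) ∣ z + 2 ∧ M ∣ z + 2) ∨
  ((6:ℤ) ∣ z - 3 ∧ M ∣ z - s) ∨
  ((6:ℤ) ∣ z - 3 ∧ M ∣ z + s)

theorem stmt7 (m : ℕ) (hm : m.Prime) (h : m % 6 = 1) :
    ∃ s : ℤ, (m : ℤ) ∣ s ^ 2 + 3 ∧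
      ∀ n : ℕ, (m ∣ p3 n ↔
        ∃ x : ZMod (6 * m),
          (x = 0 ∨ x = 1 ∨ x = 2 ∨
            x = 2 * (m : ZMod (6 * m)) - 1 ∨
            x = 2 * (m : ZMod (6 * m)) + 2 ∨
            x = 3 * (m : ZMod (6 * m)) + (s : ZMod (6 * m)) * ((m : ZMod (6 * m)) - 1)) ∧
          ((n : ZMod (6 * m)) = x ∨ (n : ZMod (6 * m)) = -x)) := by
  obtain ⟨s, hs⟩ := exists_s m hm h
  refine ⟨s, hs, fun n => ?_⟩
  have hM6 : (m:ℤ) % 6 = 1 := by omega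
  have hpZ : Prime ((m:ℕ) : ℤ) := Nat.prime_iff_prime_int.mp hm
  have hcopn : Nat.Coprime 6 m := by
    rw [Nat.Coprime, Nat.gcd_rec, h]
    decide
  have hco : IsCoprime (6:ℤ) (m:ℤ) := by
    have h2 := Nat.isCoprime_iff_coprime.mpr hcopn
    exact_mod_cast h2
  have key := zmod_cast_iff m hco n
  have h6M1 : (6:ℤ) ∣ (m:ℤ) - 1 := by omega
  obtain ⟨u, hu⟩ : (6:ℤ) ∣ s * ((m:ℤ) - 1) := h6M1.mul_left s
  -- The twelve translation lemmas
  have E0 : ((n : ZMod (6*m)) = 0) ↔ ((6:ℤ) ∣ (n:ℤ) ∧ (m:ℤ) ∣ (n:ℤ)) := by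
    rw [show (0 : ZMod (6*m)) = (((0:ℤ)) : ZMod (6*m)) by norm_num, key 0]
    simp [sub_zero]
  have E1p : ((n : ZMod (6*m)) = 1) ↔ ((6:ℤ) ∣ (n:ℤ) - 1 ∧ (m:ℤ) ∣ (n:ℤ) - 1) := by
    rw [show (1 : ZMod (6*m)) = (((1:ℤ)) : ZMod (6*m)) by norm_num, key 1]
  have E1m : ((n : ZMod (6*m)) = -1) ↔ ((6:ℤ) ∣ (n:ℤ) + 1 ∧ (m:ℤ) ∣ (n:ℤ) + 1) := by
    rw [show (-1 : ZMod (6*m)) = (((-1:ℤ)) : ZMod (6*m)) by norm_num, key (-1)]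
    rw [show (n:ℤ) - (-1) = (n:ℤ) + 1 by ring]
  have E2p : ((n : ZMod (6*m)) = 2) ↔ ((6:ℤ) ∣ (n:ℤ) - 2 ∧ (m:ℤ) ∣ (n:ℤ) - 2) := by
    rw [show (2 : ZMod (6*m)) = (((2:ℤ)) : ZMod (6*m)) by norm_num, key 2]
  have E2m : ((n : ZMod (6*m)) = -2) ↔ ((6:ℤ) ∣ (n:ℤ) + 2 ∧ (m:ℤ) ∣ (n:ℤ) + 2) := by
    rw [show (-2 : ZMod (6*m)) = (((-2:ℤ)) : ZMod (6*m)) by norm_num, key (-2)]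
    rw [show (n:ℤ) - (-2) = (n:ℤ) + 2 by ring]
  have E3p : ((n : ZMod (6*m)) = 2 * (m : ZMod (6*m)) - 1) ↔
      ((6:ℤ) ∣ (n:ℤ) - 1 ∧ (m:ℤ) ∣ (n:ℤ) + 1) := by
    rw [show (2 * (m : ZMod (6*m)) - 1) = (((2*(m:ℤ) - 1 : ℤ)) : ZMod (6*m)) by push_cast; ring,
      key (2*(m:ℤ) - 1)]
    constructor
    · rintro ⟨ha, hb⟩
      exact ⟨by omega, (dvd_shift (m:ℤ) ((n:ℤ) - (2*(m:ℤ)-1)) ((n:ℤ)+1) 2 (by ring)).mp hb⟩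
    · rintro ⟨ha, hb⟩
      exact ⟨by omega, (dvd_shift (m:ℤ) ((n:ℤ) - (2*(m:ℤ)-1)) ((n:ℤ)+1) 2 (by ring)).mpr hb⟩
  have E3m : ((n : ZMod (6*m)) = -(2 * (m : ZMod (6*m)) - 1)) ↔
      ((6:ℤ) ∣ (n:ℤ) + 1 ∧ (m:ℤ) ∣ (n:ℤ) - 1) := by
    rw [show (-(2 * (m : ZMod (6*m)) - 1)) = (((-(2*(m:ℤ) - 1) : ℤ)) : ZMod (6*m)) by push_cast; ring,
      key (-(2*(m:ℤ) - 1))]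
    constructor
    · rintro ⟨ha, hb⟩
      exact ⟨by omega, (dvd_shift (m:ℤ) ((n:ℤ) - (-(2*(m:ℤ)-1))) ((n:ℤ)-1) (-2) (by ring)).mp hb⟩
    · rintro ⟨ha, hb⟩
      exact ⟨by omega, (dvd_shift (m:ℤ) ((n:ℤ) - (-(2*(m:ℤ)-1))) ((n:ℤ)-1) (-2) (by ring)).mpr hb⟩
  have E4p : ((n : ZMod (6*m)) = 2 * (m : ZMod (6*m)) + 2) ↔
      ((6:ℤ) ∣ (n:ℤ) + 2 ∧ (m:ℤ) ∣ (n:ℤ) - 2) := by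
    rw [show (2 * (m : ZMod (6*m)) + 2) = (((2*(m:ℤ) + 2 : ℤ)) : ZMod (6*m)) by push_cast; ring,
      key (2*(m:ℤ) + 2)]
    constructor
    · rintro ⟨ha, hb⟩
      exact ⟨by omega, (dvd_shift (m:ℤ) ((n:ℤ) - (2*(m:ℤ)+2)) ((n:ℤ)-2) 2 (by ring)).mp hb⟩
    · rintro ⟨ha, hb⟩
      exact ⟨by omega, (dvd_shift (m:ℤ) ((n:ℤ) - (2*(m:ℤ)+2)) ((n:ℤ)-2) 2 (by ring)).mpr hb⟩
  have E4m : ((n : ZMod (6*m)) = -(2 * (m : ZMod (6*m)) + 2)) ↔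
      ((6:ℤ) ∣ (n:ℤ) - 2 ∧ (m:ℤ) ∣ (n:ℤ) + 2) := by
    rw [show (-(2 * (m : ZMod (6*m)) + 2)) = (((-(2*(m:ℤ) + 2) : ℤ)) : ZMod (6*m)) by push_cast; ring,
      key (-(2*(m:ℤ) + 2))]
    constructor
    · rintro ⟨ha, hb⟩
      exact ⟨by omega, (dvd_shift (m:ℤ) ((n:ℤ) - (-(2*(m:ℤ)+2))) ((n:ℤ)+2) (-2) (by ring)).mp hb⟩
    · rintro ⟨ha, hb⟩
      exact ⟨by omega, (dvd_shift (m:ℤ) ((n:ℤ) - (-(2*(m:ℤ)+2))) ((n:ℤ)+2) (-2) (by ring)).mpr hb⟩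
  have E5p : ((n : ZMod (6*m)) = 3 * (m : ZMod (6*m)) + (s : ZMod (6*m)) * ((m : ZMod (6*m)) - 1)) ↔
      ((6:ℤ) ∣ (n:ℤ) - 3 ∧ (m:ℤ) ∣ (n:ℤ) + s) := by
    rw [show (3 * (m : ZMod (6*m)) + (s : ZMod (6*m)) * ((m : ZMod (6*m)) - 1))
        = (((3*(m:ℤ) + s*((m:ℤ)-1) : ℤ)) : ZMod (6*m)) by push_cast; ring,
      key (3*(m:ℤ) + s*((m:ℤ)-1))]
    have hrw : (n:ℤ) - (3*(m:ℤ) + s*((m:ℤ)-1)) = (n:ℤ) - 3*(m:ℤ) - 6*u := by rw [← hu]; ring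
    constructor
    · rintro ⟨ha, hb⟩
      rw [hrw] at ha
      exact ⟨by omega, (dvd_shift (m:ℤ) ((n:ℤ) - (3*(m:ℤ) + s*((m:ℤ)-1))) ((n:ℤ)+s) (3+s) (by ring)).mp hb⟩
    · rintro ⟨ha, hb⟩
      refine ⟨?_, (dvd_shift (m:ℤ) ((n:ℤ) - (3*(m:ℤ) + s*((m:ℤ)-1))) ((n:ℤ)+s) (3+s) (by ring)).mpr hb⟩
      rw [hrw]; omega
  have E5m : ((n : ZMod (6*m)) = -(3 * (m : ZMod (6*m)) + (s : ZMod (6*m)) * ((m : ZMod (6*m)) - 1))) ↔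
      ((6:ℤ) ∣ (n:ℤ) - 3 ∧ (m:ℤ) ∣ (n:ℤ) - s) := by
    rw [show (-(3 * (m : ZMod (6*m)) + (s : ZMod (6*m)) * ((m : ZMod (6*m)) - 1)))
        = (((-(3*(m:ℤ) + s*((m:ℤ)-1)) : ℤ)) : ZMod (6*m)) by push_cast; ring,
      key (-(3*(m:ℤ) + s*((m:ℤ)-1)))]
    have hrw : (n:ℤ) - (-(3*(m:ℤ) + s*((m:ℤ)-1))) = (n:ℤ) + 3*(m:ℤ) + 6*u := by rw [← hu]; ring
    constructor
    · rintro ⟨ha, hb⟩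
      rw [hrw] at ha
      exact ⟨by omega, (dvd_shift (m:ℤ) ((n:ℤ) - (-(3*(m:ℤ) + s*((m:ℤ)-1)))) ((n:ℤ)-s) (-(3+s)) (by ring)).mp hb⟩
    · rintro ⟨ha, hb⟩
      refine ⟨?_, (dvd_shift (m:ℤ) ((n:ℤ) - (-(3*(m:ℤ) + s*((m:ℤ)-1)))) ((n:ℤ)-s) (-(3+s)) (by ring)).mpr hb⟩
      rw [hrw]; omega
  -- RHS ↔ Dset
  have hR : (∃ x : ZMod (6 * m),
          (x = 0 ∨ x = 1 ∨ x = 2 ∨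
            x = 2 * (m : ZMod (6 * m)) - 1 ∨
            x = 2 * (m : ZMod (6 * m)) + 2 ∨
            x = 3 * (m : ZMod (6 * m)) + (s : ZMod (6 * m)) * ((m : ZMod (6 * m)) - 1)) ∧
          ((n : ZMod (6 * m)) = x ∨ (n : ZMod (6 * m)) = -x)) ↔ Dset (n:ℤ) (m:ℤ) s := by
    constructor
    · rintro ⟨x, (rfl|rfl|rfl|rfl|rfl|rfl), (h'|h')⟩
      · rw [E0] at h'; exact Or.inl h'
      · rw [neg_zero, E0] at h'; exact Or.inl h'
      · rw [E1p] at h'; exact Or.inr (Or.inl h')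
      · rw [E1m] at h'; exact Or.inr (Or.inr (Or.inr (Or.inr (Or.inl h'))))
      · rw [E2p] at h'; exact Or.inr (Or.inr (Or.inr (Or.inr (Or.inr (Or.inl h')))))
      · rw [E2m] at h'
        exact Or.inr (Or.inr (Or.inr (Or.inr (Or.inr (Or.inr (Or.inr (Or.inr (Or.inl h'))))))))
      · rw [E3p] at h'; exact Or.inr (Or.inr (Or.inl h'))
      · rw [E3m] at h'; exact Or.inr (Or.inr (Or.inr (Or.inl h')))
      · rw [E4p] at h'
        exact Or.inr (Or.inr (Or.inr (Or.inr (Or.inr (Or.inr (Or.inr (Or.inl h')))))))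
      · rw [E4m] at h'
        exact Or.inr (Or.inr (Or.inr (Or.inr (Or.inr (Or.inr (Or.inl h'))))))
      · rw [E5p] at h'
        exact Or.inr (Or.inr (Or.inr (Or.inr (Or.inr (Or.inr (Or.inr (Or.inr (Or.inr
          (Or.inr h')))))))))
      · rw [E5m] at h'
        exact Or.inr (Or.inr (Or.inr (Or.inr (Or.inr (Or.inr (Or.inr (Or.inr (Or.inr
          (Or.inl h')))))))))
    · intro hd
      rcases hd with hd|hd|hd|hd|hd|hd|hd|hd|hd|hd|hd
      · exact ⟨0, Or.inl rfl, Or.inl (E0.mpr hd)⟩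
      · exact ⟨1, Or.inr (Or.inl rfl), Or.inl (E1p.mpr hd)⟩
      · exact ⟨2 * (m : ZMod (6 * m)) - 1, Or.inr (Or.inr (Or.inr (Or.inl rfl))),
          Or.inl (E3p.mpr hd)⟩
      · exact ⟨2 * (m : ZMod (6 * m)) - 1, Or.inr (Or.inr (Or.inr (Or.inl rfl))),
          Or.inr (E3m.mpr hd)⟩
      · exact ⟨1, Or.inr (Or.inl rfl), Or.inr (E1m.mpr hd)⟩
      · exact ⟨2, Or.inr (Or.inr (Or.inl rfl)), Or.inl (E2p.mpr hd)⟩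
      · exact ⟨2 * (m : ZMod (6 * m)) + 2, Or.inr (Or.inr (Or.inr (Or.inr (Or.inl rfl)))),
          Or.inr (E4m.mpr hd)⟩
      · exact ⟨2 * (m : ZMod (6 * m)) + 2, Or.inr (Or.inr (Or.inr (Or.inr (Or.inl rfl)))),
          Or.inl (E4p.mpr hd)⟩
      · exact ⟨2, Or.inr (Or.inr (Or.inl rfl)), Or.inr (E2m.mpr hd)⟩
      · exact ⟨3 * (m : ZMod (6 * m)) + (s : ZMod (6 * m)) * ((m : ZMod (6 * m)) - 1),
          Or.inr (Or.inr (Or.inr (Or.inr (Or.inr rfl)))), Or.inr (E5m.mpr hd)⟩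
      · exact ⟨3 * (m : ZMod (6 * m)) + (s : ZMod (6 * m)) * ((m : ZMod (6 * m)) - 1),
          Or.inr (Or.inr (Or.inr (Or.inr (Or.inr rfl)))), Or.inl (E5p.mpr hd)⟩
  rw [hR]
  -- Now the LHS analysis
  have hm12 : ¬ (m ∣ 12) := by
    intro hd
    have h2 := hm.two_le
    have h12 := Nat.le_of_dvd (by norm_num) hd
    interval_cases m <;> omega
  have L1 : m ∣ p3 n ↔ m ∣ 12 * p3 n :=
    ⟨fun hd => hd.mul_left 12, fun hd => ((Nat.Prime.dvd_mul hm).mp hd).resolve_left hm12⟩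
  have L2 : m ∣ 12 * p3 n ↔ (m:ℤ) ∣ 12 * ((p3 n : ℕ) : ℤ) := by
    constructor <;> intro hd <;> exact_mod_cast hd
  have hsq : ∀ c : ℤ, ((m:ℤ) ∣ (n:ℤ)^2 - c^2 ↔ ((m:ℤ) ∣ (n:ℤ) - c ∨ (m:ℤ) ∣ (n:ℤ) + c)) := by
    intro c
    rw [show (n:ℤ)^2 - c^2 = ((n:ℤ) - c) * ((n:ℤ) + c) by ring, hpZ.dvd_mul]
  have hp := p3_closed n
  have hK := Nat.pow_mod n 2 12
  obtain ⟨K, hKK⟩ : ∃ K, n ^ 2 = K := ⟨_, rfl⟩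
  rw [hKK] at hp hK
  have hKz : (K : ℤ) = (n:ℤ) ^ 2 := by rw [← hKK]; push_cast; ring
  have hr6 : n % 6 = 0 ∨ n % 6 = 1 ∨ n % 6 = 2 ∨ n % 6 = 3 ∨ n % 6 = 4 ∨ n % 6 = 5 := by omega
  rcases hr6 with hr|hr|hr|hr|hr|hr
  · -- r = 0 : 12 p3 = n^2, (m:ℤ) | (n:ℤ)^2 ↔ (m:ℤ) | (n:ℤ)
    have hK2 : K % 12 = 0 := by
      have h12 : n % 12 = 0 ∨ n % 12 = 6 := by omega
      rcases h12 with h'|h' <;> rw [h'] at hK <;> norm_num at hK <;> omega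
    have hE : 12 * p3 n = K := by omega
    have hEZ : 12 * ((p3 n : ℕ) : ℤ) = (n:ℤ) ^ 2 := by
      have := congrArg (fun t : ℕ => (t : ℤ)) hE
      push_cast at this
      rw [this, hKz]
    rw [L1, L2, hEZ]
    have hzz : (m:ℤ) ∣ (n:ℤ) ^ 2 ↔ (m:ℤ) ∣ (n:ℤ) :=
      ⟨fun hd => hpZ.dvd_of_dvd_pow hd, fun hd => dvd_pow hd two_ne_zero⟩
    rw [hzz]
    have t0 : (6:ℤ) ∣ (n:ℤ) := by omega
    have f1 : ¬ (6:ℤ) ∣ (n:ℤ) - 1 := by omega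
    have f2 : ¬ (6:ℤ) ∣ (n:ℤ) + 1 := by omega
    have f3 : ¬ (6:ℤ) ∣ (n:ℤ) - 2 := by omega
    have f4 : ¬ (6:ℤ) ∣ (n:ℤ) + 2 := by omega
    have f5 : ¬ (6:ℤ) ∣ (n:ℤ) - 3 := by omega
    unfold Dset
    constructor
    · intro hMv
      exact Or.inl (⟨t0, hMv⟩)
    · rintro (⟨h6, hMv⟩|⟨h6, hMv⟩|⟨h6, hMv⟩|⟨h6, hMv⟩|⟨h6, hMv⟩|⟨h6, hMv⟩|⟨h6, hMv⟩|⟨h6, hMv⟩|⟨h6, hMv⟩|⟨h6, hMv⟩|⟨h6, hMv⟩)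
      · exact hMv
      · exact absurd h6 f1
      · exact absurd h6 f1
      · exact absurd h6 f2
      · exact absurd h6 f2
      · exact absurd h6 f3
      · exact absurd h6 f3
      · exact absurd h6 f4
      · exact absurd h6 f4
      · exact absurd h6 f5
      · exact absurd h6 f5
  · -- r = 1
    have hK2 : K % 12 = 1 := by
      have h12 : n % 12 = 1 ∨ n % 12 = 7 := by omega
      rcases h12 with h'|h' <;> rw [h'] at hK <;> norm_num at hK <;> omega
    have hE : 12 * p3 n + 1 = K := by omega
    have hEZ : 12 * ((p3 n : ℕ) : ℤ) = (n:ℤ) ^ 2 - 1^2 := by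
      have := congrArg (fun t : ℕ => (t : ℤ)) hE
      push_cast at this
      rw [← hKz]; omega
    rw [L1, L2, hEZ, hsq 1]
    have t0 : (6:ℤ) ∣ (n:ℤ) - 1 := by omega
    have f1 : ¬ (6:ℤ) ∣ (n:ℤ) := by omega
    have f2 : ¬ (6:ℤ) ∣ (n:ℤ) + 1 := by omega
    have f3 : ¬ (6:ℤ) ∣ (n:ℤ) - 2 := by omega
    have f4 : ¬ (6:ℤ) ∣ (n:ℤ) + 2 := by omega
    have f5 : ¬ (6:ℤ) ∣ (n:ℤ) - 3 := by omega
    unfold Dset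
    constructor
    · rintro (hMv | hMv)
      · exact Or.inr (Or.inl (⟨t0, hMv⟩))
      · exact Or.inr (Or.inr (Or.inl (⟨t0, hMv⟩)))
    · rintro (⟨h6, hMv⟩|⟨h6, hMv⟩|⟨h6, hMv⟩|⟨h6, hMv⟩|⟨h6, hMv⟩|⟨h6, hMv⟩|⟨h6, hMv⟩|⟨h6, hMv⟩|⟨h6, hMv⟩|⟨h6, hMv⟩|⟨h6, hMv⟩)
      · exact absurd h6 f1
      · exact Or.inl hMv
      · exact Or.inr hMv
      · exact absurd h6 f2
      · exact absurd h6 f2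
      · exact absurd h6 f3
      · exact absurd h6 f3
      · exact absurd h6 f4
      · exact absurd h6 f4
      · exact absurd h6 f5
      · exact absurd h6 f5
  · -- r = 2
    have hK2 : K % 12 = 4 := by
      have h12 : n % 12 = 2 ∨ n % 12 = 8 := by omega
      rcases h12 with h'|h' <;> rw [h'] at hK <;> norm_num at hK <;> omega
    have hE : 12 * p3 n + 4 = K := by omega
    have hEZ : 12 * ((p3 n : ℕ) : ℤ) = (n:ℤ) ^ 2 - 2^2 := by
      have := congrArg (fun t : ℕ => (t : ℤ)) hE
      push_cast at this
      rw [← hKz]; omega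
    rw [L1, L2, hEZ, hsq 2]
    have t0 : (6:ℤ) ∣ (n:ℤ) - 2 := by omega
    have f1 : ¬ (6:ℤ) ∣ (n:ℤ) := by omega
    have f2 : ¬ (6:ℤ) ∣ (n:ℤ) + 1 := by omega
    have f3 : ¬ (6:ℤ) ∣ (n:ℤ) - 1 := by omega
    have f4 : ¬ (6:ℤ) ∣ (n:ℤ) + 2 := by omega
    have f5 : ¬ (6:ℤ) ∣ (n:ℤ) - 3 := by omega
    unfold Dset
    constructor
    · rintro (hMv | hMv)
      · exact Or.inr (Or.inr (Or.inr (Or.inr (Or.inr (Or.inl (⟨t0, hMv⟩))))))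
      · exact Or.inr (Or.inr (Or.inr (Or.inr (Or.inr (Or.inr (Or.inl (⟨t0, hMv⟩)))))))
    · rintro (⟨h6, hMv⟩|⟨h6, hMv⟩|⟨h6, hMv⟩|⟨h6, hMv⟩|⟨h6, hMv⟩|⟨h6, hMv⟩|⟨h6, hMv⟩|⟨h6, hMv⟩|⟨h6, hMv⟩|⟨h6, hMv⟩|⟨h6, hMv⟩)
      · exact absurd h6 f1
      · exact absurd h6 f3
      · exact absurd h6 f3
      · exact absurd h6 f2
      · exact absurd h6 f2
      · exact Or.inl hMv
      · exact Or.inr hMv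
      · exact absurd h6 f4
      · exact absurd h6 f4
      · exact absurd h6 f5
      · exact absurd h6 f5
  · -- r = 3
    have hK2 : K % 12 = 9 := by
      have h12 : n % 12 = 3 ∨ n % 12 = 9 := by omega
      rcases h12 with h'|h' <;> rw [h'] at hK <;> norm_num at hK <;> omega
    have hE : 12 * p3 n = K + 3 := by omega
    have hEZ : 12 * ((p3 n : ℕ) : ℤ) = (n:ℤ) ^ 2 + 3 := by
      have := congrArg (fun t : ℕ => (t : ℤ)) hE
      push_cast at this
      rw [← hKz]; omega
    rw [L1, L2, hEZ]
    have hshift : (m:ℤ) ∣ (n:ℤ) ^ 2 + 3 ↔ (m:ℤ) ∣ (n:ℤ) ^ 2 - s ^ 2 := by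
      constructor
      · intro hd
        have := dvd_sub hd hs
        rw [show (n:ℤ)^2 + 3 - (s^2+3) = (n:ℤ)^2 - s^2 by ring] at this
        exact this
      · intro hd
        have := dvd_add hd hs
        rw [show (n:ℤ)^2 - s^2 + (s^2+3) = (n:ℤ)^2 + 3 by ring] at this
        exact this
    rw [hshift, hsq s]
    have t0 : (6:ℤ) ∣ (n:ℤ) - 3 := by omega
    have f1 : ¬ (6:ℤ) ∣ (n:ℤ) := by omega
    have f2 : ¬ (6:ℤ) ∣ (n:ℤ) + 1 := by omega
    have f3 : ¬ (6:ℤ) ∣ (n:ℤ) - 1 := by omega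
    have f4 : ¬ (6:ℤ) ∣ (n:ℤ) + 2 := by omega
    have f5 : ¬ (6:ℤ) ∣ (n:ℤ) - 2 := by omega
    unfold Dset
    constructor
    · rintro (hMv | hMv)
      · exact Or.inr (Or.inr (Or.inr (Or.inr (Or.inr (Or.inr (Or.inr (Or.inr (Or.inr (Or.inl (⟨t0, hMv⟩))))))))))
      · exact Or.inr (Or.inr (Or.inr (Or.inr (Or.inr (Or.inr (Or.inr (Or.inr (Or.inr (Or.inr (⟨t0, hMv⟩))))))))))
    · rintro (⟨h6, hMv⟩|⟨h6, hMv⟩|⟨h6, hMv⟩|⟨h6, hMv⟩|⟨h6, hMv⟩|⟨h6, hMv⟩|⟨h6, hMv⟩|⟨h6, hMv⟩|⟨h6, hMv⟩|⟨h6, hMv⟩|⟨h6, hMv⟩)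
      · exact absurd h6 f1
      · exact absurd h6 f3
      · exact absurd h6 f3
      · exact absurd h6 f2
      · exact absurd h6 f2
      · exact absurd h6 f5
      · exact absurd h6 f5
      · exact absurd h6 f4
      · exact absurd h6 f4
      · exact Or.inl hMv
      · exact Or.inr hMv
  · -- r = 4
    have hK2 : K % 12 = 4 := by
      have h12 : n % 12 = 4 ∨ n % 12 = 10 := by omega
      rcases h12 with h'|h' <;> rw [h'] at hK <;> norm_num at hK <;> omega
    have hE : 12 * p3 n + 4 = K := by omega
    have hEZ : 12 * ((p3 n : ℕ) : ℤ) = (n:ℤ) ^ 2 - 2^2 := by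
      have := congrArg (fun t : ℕ => (t : ℤ)) hE
      push_cast at this
      rw [← hKz]; omega
    rw [L1, L2, hEZ, hsq 2]
    have t0 : (6:ℤ) ∣ (n:ℤ) + 2 := by omega
    have f1 : ¬ (6:ℤ) ∣ (n:ℤ) := by omega
    have f2 : ¬ (6:ℤ) ∣ (n:ℤ) + 1 := by omega
    have f3 : ¬ (6:ℤ) ∣ (n:ℤ) - 1 := by omega
    have f4 : ¬ (6:ℤ) ∣ (n:ℤ) - 2 := by omega
    have f5 : ¬ (6:ℤ) ∣ (n:ℤ) - 3 := by omega
    unfold Dset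
    constructor
    · rintro (hMv | hMv)
      · exact Or.inr (Or.inr (Or.inr (Or.inr (Or.inr (Or.inr (Or.inr (Or.inl (⟨t0, hMv⟩))))))))
      · exact Or.inr (Or.inr (Or.inr (Or.inr (Or.inr (Or.inr (Or.inr (Or.inr (Or.inl (⟨t0, hMv⟩)))))))))
    · rintro (⟨h6, hMv⟩|⟨h6, hMv⟩|⟨h6, hMv⟩|⟨h6, hMv⟩|⟨h6, hMv⟩|⟨h6, hMv⟩|⟨h6, hMv⟩|⟨h6, hMv⟩|⟨h6, hMv⟩|⟨h6, hMv⟩|⟨h6, hMv⟩)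
      · exact absurd h6 f1
      · exact absurd h6 f3
      · exact absurd h6 f3
      · exact absurd h6 f2
      · exact absurd h6 f2
      · exact absurd h6 f4
      · exact absurd h6 f4
      · exact Or.inl hMv
      · exact Or.inr hMv
      · exact absurd h6 f5
      · exact absurd h6 f5
  · -- r = 5
    have hK2 : K % 12 = 1 := by
      have h12 : n % 12 = 5 ∨ n % 12 = 11 := by omega
      rcases h12 with h'|h' <;> rw [h'] at hK <;> norm_num at hK <;> omega
    have hE : 12 * p3 n + 1 = K := by omega
    have hEZ : 12 * ((p3 n : ℕ) : ℤ) = (n:ℤ) ^ 2 - 1^2 := by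
      have := congrArg (fun t : ℕ => (t : ℤ)) hE
      push_cast at this
      rw [← hKz]; omega
    rw [L1, L2, hEZ, hsq 1]
    have t0 : (6:ℤ) ∣ (n:ℤ) + 1 := by omega
    have f1 : ¬ (6:ℤ) ∣ (n:ℤ) := by omega
    have f2 : ¬ (6:ℤ) ∣ (n:ℤ) - 1 := by omega
    have f3 : ¬ (6:ℤ) ∣ (n:ℤ) - 2 := by omega
    have f4 : ¬ (6:ℤ) ∣ (n:ℤ) + 2 := by omega
    have f5 : ¬ (6:ℤ) ∣ (n:ℤ) - 3 := by omega
    unfold Dset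
    constructor
    · rintro (hMv | hMv)
      · exact Or.inr (Or.inr (Or.inr (Or.inl (⟨t0, hMv⟩))))
      · exact Or.inr (Or.inr (Or.inr (Or.inr (Or.inl (⟨t0, hMv⟩)))))
    · rintro (⟨h6, hMv⟩|⟨h6, hMv⟩|⟨h6, hMv⟩|⟨h6, hMv⟩|⟨h6, hMv⟩|⟨h6, hMv⟩|⟨h6, hMv⟩|⟨h6, hMv⟩|⟨h6, hMv⟩|⟨h6, hMv⟩|⟨h6, hMv⟩)
      · exact absurd h6 f1
      · exact absurd h6 f2
      · exact absurd h6 f2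
      · exact Or.inl hMv
      · exact Or.inr hMv
      · exact absurd h6 f3
      · exact absurd h6 f3
      · exact absurd h6 f4
      · exact absurd h6 f4
      · exact absurd h6 f5
      · exact absurd h6 f5
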